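/- arXiv:1501.01331 — 3 statements merged into one kernel-verified Lean document; each statement's English description precedes it below -/
import Mathlib

section
/- Let f : {0,1}^n → {0,1} and let K be a conjunction (a partial assignment) with N_K ⊆ N_f, i.e. every point satisfying K satisfies f. Let K₁,…,K_t be conjunctions that are implicants of f. If, after deleting from each K_j all literals occurring in K, the resulting conjunctions K'₁,…,K'_t satisfy K'₁ ∨ … ∨ K'_t ≡ 1 (with the empty conjunction taken as the constant 1), then every point satisfying K satisfies K₁ ∨ … ∨ K_t; that is, K is absorbed by the collection K₁,…,K_t. -/
/-- A point `p` satisfies a term (conjunction of literals) `T`. -/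
def sat {n : ℕ} (p : Fin n → Bool) (T : Finset (Fin n × Bool)) : Prop :=
  ∀ l ∈ T, p l.1 = l.2

/-- A term is consistent: it does not contain a variable together with its negation. -/
def consistentT {n : ℕ} (T : Finset (Fin n × Bool)) : Prop :=
  ∀ i : Fin n, ¬((i, true) ∈ T ∧ (i, false) ∈ T)

/-- A DNF (finite set of terms) realizes `f` : the disjunction of its terms equals `f`. -/
def realizes {n : ℕ} (D : Finset (Finset (Fin n × Bool)))
    (f : (Fin n → Bool) → Bool) : Prop :=
  ∀ p, f p = true ↔ ∃ T ∈ D, sat p T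

/-- Hamming distance between two Boolean points. -/
def hamming {n : ℕ} (p q : Fin n → Bool) : ℕ :=
  (Finset.univ.filter (fun i => p i ≠ q i)).card

/-- Zhuravlev's absorption criterion (sufficiency). If `K` is an implicant of `f`, the
`Ks j` are implicants of `f`, and after deleting from each `Ks j` all literals occurring
in `K` the resulting conjunctions form a tautology, then every point satisfying `K`
satisfies some `Ks j`, i.e. `K` is absorbed by the collection. -/
theorem stmt8 {n t : ℕ} (f : (Fin n → Bool) → Bool)
    (K : Finset (Fin n × Bool)) (hK : consistentT K)
    (hKf : ∀ p, sat p K → f p = true)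
    (Ks : Fin t → Finset (Fin n × Bool))
    (hKs : ∀ j, consistentT (Ks j))
    (himp : ∀ j, ∀ p, sat p (Ks j) → f p = true)
    (htaut : ∀ p : Fin n → Bool, ∃ j, sat p ((Ks j).filter (fun l => l ∉ K))) :
    ∀ p, sat p K → ∃ j, sat p (Ks j) := by
  intro p hp
  obtain ⟨j, hj⟩ := htaut p
  refine ⟨j, fun l hl => ?_⟩
  by_cases h : l ∈ K
  · exact hp l h
  · exact hj l (Finset.mem_filter.mpr ⟨hl, h⟩)
end

section
/- Let f : {0,1}^n → {0,1} be such that its zero matrix (the list of all zeros of f, as rows) has no two equal columns, no column constant 0 or constant 1, and f has no two zeros at Hamming distance 1. Suppose K = x_{i₁}^{σ₁} ∧ … ∧ x_{i_t}^{σ_t} is a conjunction such that the literals x_{i₂}^{σ₂⊕1},…,x_{i_t}^{σ_t⊕1} form a decomposition of x_{i₁}^{σ₁} with respect to the zero matrix: the column vectors associated with these literals OR together to the column of x_{i₁}^{σ₁} and are each componentwise below it. Then K is an implicant of f : every point satisfying K is a one of f. -/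
/-- Lemma 2: if the (column vectors of the) literals `x_{is s}^{¬ σs s}` form a
decomposition of the literal column of `x_{i₀}^{σ₀}` with respect to the zero matrix of
`f` (zero matrix with pairwise distinct, non-constant columns, `f` without adjacent
zeros), then the conjunction `x_{i₀}^{σ₀} ∧ ⋀_s x_{is s}^{σs s}` is an implicant of `f`. -/
theorem stmt10 {k n : ℕ} (zeros : Fin k → Fin n → Bool)
    (f : (Fin n → Bool) → Bool)
    (hf : ∀ p, f p = false ↔ ∃ r, ∀ j, p j = zeros r j)
    (hcols : ∀ j j' : Fin n, j ≠ j' →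
      (fun r => zeros r j) ≠ (fun r => zeros r j'))
    (hconst : ∀ j : Fin n, (∃ r, zeros r j = true) ∧ (∃ r, zeros r j = false))
    (hadj : ∀ p q, f p = false → f q = false → hamming p q ≠ 1)
    (t : ℕ) (i₀ : Fin n) (σ₀ : Bool) (is : Fin t → Fin n) (σs : Fin t → Bool)
    (hdecomp : ∀ r : Fin k, zeros r i₀ = σ₀ ↔ ∃ s, zeros r (is s) = !(σs s)) :
    ∀ p : Fin n → Bool, (p i₀ = σ₀ ∧ ∀ s, p (is s) = σs s) → f p = true := by
  rintro p ⟨h0, hs⟩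
  by_contra h
  rw [Bool.not_eq_true] at h
  obtain ⟨r, hr⟩ := (hf p).mp h
  obtain ⟨s, hsz⟩ := (hdecomp r).mp (by rw [← hr, h0])
  have := hs s
  rw [hr (is s), hsz] at this
  cases σs s <;> simp at this
end

section
/- The Boolean cube {0,1}^m can be partitioned into C(m, ⌊m/2⌋) pairwise disjoint symmetric saturated chains, where the number of chains of length m - 2p + 1 (i.e., with m - 2p + 1 elements) equals C(m,p) - C(m,p-1) for p = 1,…,⌊m/2⌋ (with the convention C(m,0)-C(m,-1)=1 counting the single chain of length m+1). -/
open Finset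


private lemma chain_card_injOn' {α : Type*} {C : Finset (Finset α)}
    (hC : IsChain (· ⊆ ·) (C : Set (Finset α))) :
    Set.InjOn Finset.card (C : Set (Finset α)) := by
  intro A hA B hB hcard
  rcases eq_or_ne A B with rfl | hne
  · rfl
  · rcases hC hA hB hne with h | h
    · exact Finset.eq_of_subset_of_card_le h hcard.ge
    · exact (Finset.eq_of_subset_of_card_le h hcard.le).symm

private lemma chain_sup_mem' {α : Type*} [DecidableEq α] {C : Finset (Finset α)}
    (hC : IsChain (· ⊆ ·) (C : Set (Finset α))) (hne : C.Nonempty) :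
    C.sup id ∈ C ∧ ∀ B ∈ C, B ⊆ C.sup id := by
  obtain ⟨A, hA, hmax⟩ := C.exists_max_image Finset.card hne
  have hall : ∀ B ∈ C, B ⊆ A := by
    intro B hB
    rcases eq_or_ne B A with rfl | hne'
    · exact Finset.Subset.refl _
    rcases hC hB hA hne' with h | h
    · exact h
    · exact (Finset.eq_of_subset_of_card_le h (hmax B hB)).ge
  have hs : C.sup id = A := le_antisymm (Finset.sup_le hall) (Finset.le_sup (f := id) hA)
  exact ⟨hs ▸ hA, fun B hB => Finset.le_sup (f := id) hB⟩

private lemma chain_exists_card' {m : ℕ} {C : Finset (Finset (Fin m))}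
    (hC : IsChain (· ⊆ ·) (C : Set (Finset (Fin m)))) {p : ℕ} (hp : 2 * p ≤ m)
    (hcard : C.card = m - 2 * p + 1)
    (hbd : ∀ A ∈ C, p ≤ A.card ∧ A.card ≤ m - p) {k : ℕ} (hk1 : p ≤ k) (hk2 : k ≤ m - p) :
    ∃ A ∈ C, A.card = k := by
  have hsub : C.image Finset.card ⊆ Finset.Icc p (m - p) := by
    intro x hx
    simp only [mem_image] at hx
    obtain ⟨A, hA, rfl⟩ := hx
    exact Finset.mem_Icc.2 (hbd A hA)
  have hcard' : (Finset.Icc p (m - p)).card ≤ (C.image Finset.card).card := by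
    rw [Finset.card_image_of_injOn (chain_card_injOn' hC), hcard, Nat.card_Icc]; omega
  have heq := Finset.eq_of_subset_of_card_le hsub hcard'
  have hk : k ∈ C.image Finset.card := by rw [heq]; exact Finset.mem_Icc.2 ⟨hk1, hk2⟩
  simpa using hk

private def SCD (m : ℕ) (𝒞 : Finset (Finset (Finset (Fin m)))) : Prop :=
  (∀ A : Finset (Fin m), ∃! C, C ∈ 𝒞 ∧ A ∈ C) ∧
  (∀ C ∈ 𝒞, IsChain (· ⊆ ·) (C : Set (Finset (Fin m))) ∧
    ∃ p ≤ m / 2, C.card = m - 2 * p + 1 ∧ ∀ A ∈ C, p ≤ A.card ∧ A.card ≤ m - p)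

private lemma scd_step (m : ℕ) (𝒟 : Finset (Finset (Finset (Fin m)))) (h : SCD m 𝒟) :
    ∃ 𝒞, SCD (m + 1) 𝒞 := by
  classical
  obtain ⟨hpart, hchain⟩ := h
  set e : Fin m ↪ Fin (m + 1) := Fin.castSuccEmb with he
  set ι : Finset (Fin m) → Finset (Fin (m + 1)) := fun A => A.map e with hιdef
  have hι : Function.Injective ι := fun A B h => Finset.map_injective e h
  have hcardι : ∀ A, (ι A).card = A.card := fun A => Finset.card_map e
  have hmonoι : ∀ {A B}, A ⊆ B → ι A ⊆ ι B := fun h => Finset.map_subset_map.2 h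
  have hlast : ∀ A, Fin.last m ∉ ι A := by
    intro A h
    simp only [hιdef, Finset.mem_map] at h
    obtain ⟨x, _, hx⟩ := h
    exact absurd hx (Fin.castSucc_lt_last x).ne
  have hsurj : ∀ B : Finset (Fin (m + 1)), Fin.last m ∉ B → ∃ A, ι A = B := by
    intro B hB
    refine ⟨B.attach.image (fun x => x.1.castPred (fun h => hB (h ▸ x.2))), ?_⟩
    ext y
    simp only [hιdef, Finset.mem_map, Finset.mem_image, Finset.mem_attach, true_and,
      Subtype.exists]
    constructor
    · rintro ⟨x, ⟨b, hb, rfl⟩, rfl⟩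
      simpa [he, Fin.castSucc_castPred] using hb
    · intro hy
      exact ⟨y.castPred (fun h => hB (h ▸ hy)), ⟨y, hy, rfl⟩,
        Fin.castSucc_castPred y _⟩
  -- the two chain constructions
  set top : Finset (Finset (Fin m)) → Finset (Fin (m + 1)) :=
    fun D => insert (Fin.last m) (ι (D.sup id)) with htopdef
  set up : Finset (Finset (Fin m)) → Finset (Finset (Fin (m + 1))) :=
    fun D => insert (top D) (D.image ι) with hupdef
  set side : Finset (Finset (Fin m)) → Finset (Finset (Fin (m + 1))) :=
    fun D => (D.erase (D.sup id)).image (fun A => insert (Fin.last m) (ι A)) with hsidedef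
  have hDsup : ∀ D ∈ 𝒟, D.sup id ∈ D ∧ ∀ B ∈ D, B ⊆ D.sup id := by
    intro D hD
    obtain ⟨hc, p, hp, hcard, -⟩ := hchain D hD
    exact chain_sup_mem' hc (Finset.card_pos.1 (by omega))
  have hmem_up : ∀ D (X : Finset (Fin (m + 1))),
      X ∈ up D ↔ X = top D ∨ ∃ A ∈ D, ι A = X := by
    intro D X
    simp [hupdef, Finset.mem_insert, Finset.mem_image]
  have hmem_side : ∀ D (X : Finset (Fin (m + 1))),
      X ∈ side D ↔ ∃ A ∈ D.erase (D.sup id), insert (Fin.last m) (ι A) = X := by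
    intro D X
    simp [hsidedef, Finset.mem_image]
  have htop_erase : ∀ D, (top D).erase (Fin.last m) = ι (D.sup id) := by
    intro D
    exact Finset.erase_insert (hlast _)
  refine ⟨𝒟.image up ∪ (𝒟.filter (fun D => 2 ≤ D.card)).image side, ?_, ?_⟩
  · -- partition property
    intro X
    by_cases hlX : Fin.last m ∈ X
    · -- X contains `last`
      obtain ⟨A', hA'⟩ := hsurj (X.erase (Fin.last m)) (Finset.notMem_erase _ _)
      obtain ⟨D, ⟨hD, hA'D⟩, -⟩ := hpart A'
      have hXins : insert (Fin.last m) (ι A') = X := by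
        rw [hA', Finset.insert_erase hlX]
      -- the canonical chain containing X
      have hkey : ∀ C, (C ∈ 𝒟.image up ∪ (𝒟.filter (fun D => 2 ≤ D.card)).image side) →
          X ∈ C → (C = up D ∧ A' = D.sup id) ∨ (C = side D ∧ A' ≠ D.sup id) := by
        intro C hC hXC
        rcases Finset.mem_union.1 hC with hC | hC
        · obtain ⟨D', hD', rfl⟩ := Finset.mem_image.1 hC
          rcases (hmem_up D' X).1 hXC with rfl | ⟨A, hA, rfl⟩
          · have hA'sup : A' = D'.sup id := by
              apply hι
              rw [hA', htop_erase D']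
            have hD'D : D' = D := by
              refine (hpart A').unique ⟨hD', ?_⟩ ⟨hD, hA'D⟩
              rw [hA'sup]; exact (hDsup D' hD').1
            left
            exact ⟨by rw [hD'D], by rw [hA'sup, hD'D]⟩
          · exact absurd hlX (hlast A)
        · obtain ⟨D', hD', rfl⟩ := Finset.mem_image.1 hC
          have hD'𝒟 : D' ∈ 𝒟 := (Finset.mem_filter.1 hD').1
          obtain ⟨A, hA, hAX⟩ := (hmem_side D' X).1 hXC
          have hAA' : A = A' := by
            apply hι
            rw [hA', ← hAX, Finset.erase_insert (hlast A)]
          subst hAA'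
          have hD'D : D' = D := (hpart A).unique ⟨hD'𝒟, (Finset.mem_erase.1 hA).2⟩ ⟨hD, hA'D⟩
          right
          refine ⟨by rw [hD'D], ?_⟩
          rw [← hD'D]
          exact (Finset.mem_erase.1 hA).1
      by_cases hsup : A' = D.sup id
      · refine ⟨up D, ⟨Finset.mem_union_left _ (Finset.mem_image_of_mem up hD), ?_⟩, ?_⟩
        · refine (hmem_up D X).2 (Or.inl ?_)
          rw [htopdef]
          simp only []
          rw [← hsup, hXins]
        · rintro C ⟨hC, hXC⟩
          rcases hkey C hC hXC with ⟨rfl, -⟩ | ⟨rfl, hne⟩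
          · rfl
          · exact absurd hsup hne
      · have hD2 : 2 ≤ D.card :=
          Finset.one_lt_card.2 ⟨A', hA'D, D.sup id, (hDsup D hD).1, hsup⟩
        refine ⟨side D, ⟨Finset.mem_union_right _ (Finset.mem_image_of_mem side
          (Finset.mem_filter.2 ⟨hD, hD2⟩)), ?_⟩, ?_⟩
        · exact (hmem_side D X).2 ⟨A', Finset.mem_erase.2 ⟨hsup, hA'D⟩, hXins⟩
        · rintro C ⟨hC, hXC⟩
          rcases hkey C hC hXC with ⟨rfl, heq⟩ | ⟨rfl, -⟩
          · exact absurd heq hsup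
          · rfl
    · -- X avoids `last`
      obtain ⟨A', hA'⟩ := hsurj X hlX
      obtain ⟨D, ⟨hD, hA'D⟩, -⟩ := hpart A'
      refine ⟨up D, ⟨Finset.mem_union_left _ (Finset.mem_image_of_mem up hD),
        (hmem_up D X).2 (Or.inr ⟨A', hA'D, hA'⟩)⟩, ?_⟩
      rintro C ⟨hC, hXC⟩
      rcases Finset.mem_union.1 hC with hC | hC
      · obtain ⟨D', hD', rfl⟩ := Finset.mem_image.1 hC
        rcases (hmem_up D' X).1 hXC with rfl | ⟨A, hA, hAX⟩
        · exact absurd (Finset.mem_insert_self _ _) hlX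
        · have : A = A' := hι (by rw [hAX, hA'])
          subst this
          have : D' = D := (hpart A).unique ⟨hD', hA⟩ ⟨hD, hA'D⟩
          rw [this]
      · obtain ⟨D', hD', rfl⟩ := Finset.mem_image.1 hC
        obtain ⟨A, hA, hAX⟩ := (hmem_side D' X).1 hXC
        exact absurd (hAX ▸ Finset.mem_insert_self _ _) hlX
  · -- chain property
    intro C hC
    rcases Finset.mem_union.1 hC with hC | hC
    · -- C = up D
      obtain ⟨D, hD, rfl⟩ := Finset.mem_image.1 hC
      obtain ⟨hDc, p, hp, hDcard, hbd⟩ := hchain D hD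
      have h2p : 2 * p ≤ m := by omega
      obtain ⟨hsupD, hall⟩ := hDsup D hD
      constructor
      · -- chain
        intro X hX Y hY hne
        rcases (hmem_up D X).1 hX with rfl | ⟨A, hA, rfl⟩
        · rcases (hmem_up D Y).1 hY with rfl | ⟨B, hB, rfl⟩
          · exact absurd rfl hne
          · exact Or.inr ((hmonoι (hall B hB)).trans (Finset.subset_insert _ _))
        · rcases (hmem_up D Y).1 hY with rfl | ⟨B, hB, rfl⟩
          · exact Or.inl ((hmonoι (hall A hA)).trans (Finset.subset_insert _ _))
          · rcases eq_or_ne A B with rfl | hAB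
            · exact absurd rfl hne
            · rcases hDc hA hB hAB with h | h
              · exact Or.inl (hmonoι h)
              · exact Or.inr (hmonoι h)
      · refine ⟨p, by omega, ?_, ?_⟩
        · have htopnot : top D ∉ D.image ι := by
            intro hmem
            obtain ⟨A, -, hA⟩ := Finset.mem_image.1 hmem
            exact hlast A (hA ▸ Finset.mem_insert_self _ _)
          rw [hupdef]
          simp only []
          rw [Finset.card_insert_of_notMem htopnot, Finset.card_image_of_injective D hι,
            hDcard]
          omega
        · intro X hX
          rcases (hmem_up D X).1 hX with rfl | ⟨A, hA, rfl⟩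
          · have : (top D).card = (D.sup id).card + 1 := by
              rw [htopdef]
              simp only []
              rw [Finset.card_insert_of_notMem (hlast _), hcardι]
            have hb := hbd _ hsupD
            omega
          · have hb := hbd A hA
            rw [hcardι]
            omega
    · -- C = side D
      obtain ⟨D, hD', rfl⟩ := Finset.mem_image.1 hC
      obtain ⟨hD, hD2⟩ := Finset.mem_filter.1 hD'
      obtain ⟨hDc, p, hp, hDcard, hbd⟩ := hchain D hD
      have h2p : 2 * p + 1 ≤ m := by omega
      obtain ⟨hsupD, hall⟩ := hDsup D hD
      have hcardlt : ∀ A ∈ D.erase (D.sup id), A.card < (D.sup id).card := by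
        intro A hA
        obtain ⟨hAne, hAD⟩ := Finset.mem_erase.1 hA
        exact Finset.card_lt_card (HasSubset.Subset.ssubset_of_ne (hall A hAD) hAne)
      constructor
      · intro X hX Y hY hne
        obtain ⟨A, hA, rfl⟩ := (hmem_side D X).1 hX
        obtain ⟨B, hB, rfl⟩ := (hmem_side D Y).1 hY
        have hAB : A ≠ B := fun h => hne (by rw [h])
        rcases hDc (Finset.mem_of_mem_erase hA) (Finset.mem_of_mem_erase hB) hAB with h | h
        · exact Or.inl (Finset.insert_subset_insert _ (hmonoι h))
        · exact Or.inr (Finset.insert_subset_insert _ (hmonoι h))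
      · refine ⟨p + 1, by omega, ?_, ?_⟩
        · rw [hsidedef]
          simp only []
          rw [Finset.card_image_of_injOn, Finset.card_erase_of_mem hsupD, hDcard]
          · omega
          · intro A hA B hB hABeq
            apply hι
            have h1 : insert (Fin.last m) (ι A) = insert (Fin.last m) (ι B) := hABeq
            rw [← Finset.erase_insert (hlast A), h1, Finset.erase_insert (hlast B)]
        · intro X hX
          obtain ⟨A, hA, rfl⟩ := (hmem_side D X).1 hX
          have hcX : (insert (Fin.last m) (ι A)).card = A.card + 1 := by
            rw [Finset.card_insert_of_notMem (hlast _), hcardι]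
          have hb := hbd A (Finset.mem_of_mem_erase hA)
          have hlt := hcardlt A hA
          have hbs := hbd _ hsupD
          omega
private lemma scd_exists : ∀ m, ∃ 𝒞, SCD m 𝒞 := by
  intro m
  induction m with
  | zero =>
    refine ⟨{{∅}}, ?_, ?_⟩
    · intro A
      have hA : A = ∅ := Finset.eq_empty_of_isEmpty A
      subst hA
      refine ⟨{∅}, ⟨Finset.mem_singleton_self _, Finset.mem_singleton_self _⟩, ?_⟩
      rintro C ⟨hC, -⟩
      exact Finset.mem_singleton.1 hC
    · intro C hC
      rw [Finset.mem_singleton] at hC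
      subst hC
      refine ⟨?_, 0, le_refl _, by simp, ?_⟩
      · rw [Finset.coe_singleton]
        exact Set.subsingleton_singleton.isChain
      · intro A hA
        rw [Finset.mem_singleton] at hA
        subst hA
        simp
  | succ n ih =>
    obtain ⟨𝒟, h𝒟⟩ := ih
    exact scd_step n 𝒟 h𝒟

/-- Hansel / de Bruijn–Tengbergen–Kruyswijk symmetric chain decomposition: the Boolean
cube (powerset of `Fin m`) can be partitioned into `C(m, ⌊m/2⌋)` pairwise disjoint
saturated symmetric chains; the number of chains with `m - 2p + 1` elements (ranks
running from `p` to `m - p`) equals `C(m,p) - C(m,p-1)` for `p = 1, …, ⌊m/2⌋`. -/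
theorem stmt15 (m : ℕ) :
    ∃ 𝒞 : Finset (Finset (Finset (Fin m))),
      (∀ A : Finset (Fin m), ∃! C, C ∈ 𝒞 ∧ A ∈ C) ∧
      (∀ C ∈ 𝒞, IsChain (· ⊆ ·) (C : Set (Finset (Fin m))) ∧
        ∃ p ≤ m / 2, C.card = m - 2 * p + 1 ∧
          ∀ A ∈ C, p ≤ A.card ∧ A.card ≤ m - p) ∧
      𝒞.card = m.choose (m / 2) ∧
      (∀ p : ℕ, 1 ≤ p → p ≤ m / 2 →
        (𝒞.filter (fun C => C.card = m - 2 * p + 1)).card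
          = m.choose p - m.choose (p - 1)) := by
  classical
  obtain ⟨𝒞, hpart, hchain⟩ := scd_exists m
  set cof : Finset (Fin m) → Finset (Finset (Fin m)) :=
    fun A => ((hpart A).exists).choose with hcofdef
  have hcof : ∀ A, cof A ∈ 𝒞 ∧ A ∈ cof A := fun A => ((hpart A).exists).choose_spec
  have huniq : ∀ A C, C ∈ 𝒞 → A ∈ C → C = cof A :=
    fun A C h1 h2 => (hpart A).unique ⟨h1, h2⟩ (hcof A)
  have hS : ∀ p, p ≤ m / 2 →
      (𝒞.filter (fun C => ∃ q ≤ p, C.card = m - 2 * q + 1)).card = m.choose p := by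
    intro p hp
    have h2p : 2 * p ≤ m := by omega
    have hb : (Finset.powersetCard p (Finset.univ : Finset (Fin m))).card =
        (𝒞.filter (fun C => ∃ q ≤ p, C.card = m - 2 * q + 1)).card := by
      refine Finset.card_bij (fun A _ => cof A) ?_ ?_ ?_
      · intro A hA
        obtain ⟨-, q, hq, hcard, hbd⟩ := hchain _ (hcof A).1
        have hAp : A.card = p := (Finset.mem_powersetCard.1 hA).2
        refine Finset.mem_filter.2 ⟨(hcof A).1, q, ?_, hcard⟩
        have := (hbd A (hcof A).2).1
        omega
      · intro A₁ h₁ A₂ h₂ heq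
        obtain ⟨hc, -⟩ := hchain _ (hcof A₁).1
        have hm₁ : A₁ ∈ cof A₁ := (hcof A₁).2
        have heq' : cof A₁ = cof A₂ := heq
        have hm₂ : A₂ ∈ cof A₁ := heq'.symm ▸ (hcof A₂).2
        have hcards : A₁.card = A₂.card := by
          rw [(Finset.mem_powersetCard.1 h₁).2, (Finset.mem_powersetCard.1 h₂).2]
        rcases eq_or_ne A₁ A₂ with h | h
        · exact h
        · rcases hc hm₁ hm₂ h with hss | hss
          · exact Finset.eq_of_subset_of_card_le hss hcards.ge
          · exact (Finset.eq_of_subset_of_card_le hss hcards.le).symm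
      · intro C hC
        obtain ⟨hC𝒞, q, hqp, hcardC⟩ := Finset.mem_filter.1 hC
        obtain ⟨hCc, q', hq', hcard', hbd'⟩ := hchain _ hC𝒞
        have hqq : q = q' := by omega
        subst hqq
        obtain ⟨A, hAC, hAcard⟩ := chain_exists_card' hCc (by omega) hcard' hbd'
          (k := p) hqp (by omega)
        exact ⟨A, Finset.mem_powersetCard.2 ⟨Finset.subset_univ A, hAcard⟩,
          (huniq A C hC𝒞 hAC).symm⟩
    rw [← hb, Finset.card_powersetCard, Finset.card_univ, Fintype.card_fin]
  refine ⟨𝒞, hpart, hchain, ?_, ?_⟩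
  · have hfull : 𝒞.filter (fun C => ∃ q ≤ m / 2, C.card = m - 2 * q + 1) = 𝒞 := by
      refine Finset.filter_eq_self.2 ?_
      intro C hC
      obtain ⟨-, q, hq, hcard, -⟩ := hchain C hC
      exact ⟨q, hq, hcard⟩
    rw [← hfull, hS (m / 2) le_rfl]
  · intro p hp1 hp2
    have h2p : 2 * p ≤ m := by omega
    have hsub : 𝒞.filter (fun C => ∃ q ≤ p - 1, C.card = m - 2 * q + 1) ⊆
        𝒞.filter (fun C => ∃ q ≤ p, C.card = m - 2 * q + 1) := by
      intro C hC
      obtain ⟨hC𝒞, q, hq, hc⟩ := Finset.mem_filter.1 hC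
      exact Finset.mem_filter.2 ⟨hC𝒞, q, by omega, hc⟩
    have heqset : 𝒞.filter (fun C => C.card = m - 2 * p + 1) =
        𝒞.filter (fun C => ∃ q ≤ p, C.card = m - 2 * q + 1) \
        𝒞.filter (fun C => ∃ q ≤ p - 1, C.card = m - 2 * q + 1) := by
      ext C
      simp only [Finset.mem_filter, Finset.mem_sdiff, not_and, not_exists]
      constructor
      · rintro ⟨hC𝒞, hcc⟩
        refine ⟨⟨hC𝒞, p, le_rfl, hcc⟩, ?_⟩
        intro _ q hq hcq
        omega
      · rintro ⟨⟨hC𝒞, q, hq, hcq⟩, hnot⟩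
        refine ⟨hC𝒞, ?_⟩
        by_cases hqle : q ≤ p - 1
        · exact absurd hcq (hnot hC𝒞 q hqle)
        · have : q = p := by omega
          subst this
          exact hcq
    rw [heqset, Finset.card_sdiff_of_subset hsub, hS p hp2, hS (p - 1) (by omega)]
end
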